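/- arXiv:2106.10937 — 4 statements merged into one kernel-verified Lean document; each statement's English description precedes it below -/
import Mathlib

section
/- Let D be a linear operator on L²(]-1/2,1/2[; ℝᴺ) with H¹₀ ⊆ dom(D) ⊆ H¹ and Du = u' for u ∈ dom(D). Suppose there is a matrix M ∈ ℝ^{N×N} with M*M ≤ 1 (in the sense of positive semidefinite ordering) such that every u ∈ dom(D) satisfies M·u(1/2⁻) + u(-1/2⁺) = 0. Then D is accretive: ⟨Du, u⟩_{L²} ≥ 0 for all u ∈ dom(D). -/
open MeasureTheory Set Matrix

/-- `u ∈ H¹(]a,b[; E)`, encoded via its continuous representative together with its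
(L²) derivative `du` and the fundamental theorem of calculus. -/
def IsH1Rep {E : Type*} [NormedAddCommGroup E] [NormedSpace ℝ E] (a b : ℝ)
    (u du : ℝ → E) : Prop :=
  ContinuousOn u (Set.Icc a b) ∧
  MemLp du 2 (volume.restrict (Set.Ioo a b)) ∧
  ∀ x ∈ Set.Icc a b, u x = u a + ∫ t in Set.Ioo a x, du t

lemma ftc_sq (a b c : ℝ) (hab : a ≤ b) (g : ℝ → ℝ) (hg : IntegrableOn g (Ioo a b)) :
    ∫ x in Ioo a b, g x * (c + ∫ t in Ioo a x, g t) =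
      ((c + ∫ t in Ioo a b, g t) ^ 2 - c ^ 2) / 2 := by
  set μ := volume.restrict (Ioo a b) with hμdef
  haveI : IsFiniteMeasure μ := ⟨by
    rw [hμdef, Measure.restrict_apply_univ]; exact measure_Ioo_lt_top⟩
  set F : ℝ → ℝ := fun x => ∫ t in Ioo a x, g t with hFdef
  set v : ℝ := ∫ t in Ioo a b, g t with hvdef
  have hgi : Integrable g μ := hg
  -- continuity of F on Icc
  have hgIcc : IntegrableOn g (Icc a b) := (integrableOn_Icc_iff_integrableOn_Ioo (f := g)).2 hg
  have hFc : ContinuousOn F (Icc a b) := by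
    have h := intervalIntegral.continuousOn_primitive (f := g) (a := a) (b := b) (μ := volume) hgIcc
    have : (fun x => ∫ t in Ioc a x, g t) = F := by
      funext x; exact integral_Ioc_eq_integral_Ioo
    rwa [this] at h
  -- bound for F on Icc
  obtain ⟨C, hC⟩ := (isCompact_Icc (a := a) (b := b)).exists_bound_of_continuousOn hFc
  have hFmeas : AEStronglyMeasurable F μ :=
    (hFc.mono Ioo_subset_Icc_self).aestronglyMeasurable measurableSet_Ioo
  have hFbdd : ∀ᵐ x ∂μ, ‖F x‖ ≤ C := by
    filter_upwards [ae_restrict_mem measurableSet_Ioo] with x hx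
    exact hC x (Ioo_subset_Icc_self hx)
  have hgF : Integrable (fun x => F x * g x) μ := hgi.bdd_mul hFmeas hFbdd
  have hgF' : Integrable (fun x => g x * F x) μ := by
    simpa [mul_comm] using hgF
  -- double integral machinery
  set H : ℝ × ℝ → ℝ := fun p => if p.2 < p.1 then g p.1 * g p.2 else 0 with hHdef
  set H' : ℝ × ℝ → ℝ := fun p => if p.1 < p.2 then g p.1 * g p.2 else 0 with hH'def
  have hbase : Integrable (fun p : ℝ × ℝ => g p.1 * g p.2) (μ.prod μ) := hgi.mul_prod hgi
  have hs : MeasurableSet {p : ℝ × ℝ | p.2 < p.1} := measurableSet_lt measurable_snd measurable_fst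
  have hs' : MeasurableSet {p : ℝ × ℝ | p.1 < p.2} := measurableSet_lt measurable_fst measurable_snd
  have hHint : Integrable H (μ.prod μ) := by
    have := hbase.indicator hs
    refine this.congr (Filter.Eventually.of_forall fun p => ?_)
    simp [Set.indicator_apply, hHdef]
  have hH'int : Integrable H' (μ.prod μ) := by
    have := hbase.indicator hs'
    refine this.congr (Filter.Eventually.of_forall fun p => ?_)
    simp [Set.indicator_apply, hH'def]
  -- Claim A : ∫ H = ∫ g * F
  have claimA : ∫ p, H p ∂(μ.prod μ) = ∫ x, g x * F x ∂μ := by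
    rw [integral_prod H hHint]
    refine integral_congr_ae ?_
    filter_upwards [ae_restrict_mem measurableSet_Ioo] with x hx
    have h1 : ∀ y, H (x, y) = g x * (Iio x).indicator g y := by
      intro y
      simp [hHdef, Set.indicator_apply, mem_Iio, mul_ite]
    simp_rw [h1]
    rw [integral_const_mul]
    congr 1
    rw [integral_indicator measurableSet_Iio, hμdef, Measure.restrict_restrict measurableSet_Iio]
    have hset : Iio x ∩ Ioo a b = Ioo a x := by
      ext y
      simp only [mem_inter_iff, mem_Iio, mem_Ioo]
      constructor
      · rintro ⟨hy1, hy2, hy3⟩; exact ⟨hy2, hy1⟩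
      · rintro ⟨hy1, hy2⟩; exact ⟨hy2, hy1, hy2.trans hx.2⟩
    rw [hset]
  -- Claim B : ∫ H = ∫ H'
  have claimB : ∫ p, H' p ∂(μ.prod μ) = ∫ p, H p ∂(μ.prod μ) := by
    have h := integral_prod_swap (μ := μ) (ν := μ) H
    have h2 : (fun z : ℝ × ℝ => H z.swap) = H' := by
      funext z
      simp [hHdef, hH'def, Prod.swap, mul_comm]
    rwa [h2] at h
  -- diagonal is null
  have hdiag : (μ.prod μ) {p : ℝ × ℝ | p.1 = p.2} = 0 := by
    have hm : MeasurableSet {p : ℝ × ℝ | p.1 = p.2} :=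
      measurableSet_eq_fun measurable_fst measurable_snd
    rw [Measure.prod_apply hm]
    have : ∀ x : ℝ, μ (Prod.mk x ⁻¹' {p : ℝ × ℝ | p.1 = p.2}) = 0 := by
      intro x
      have he : Prod.mk x ⁻¹' {p : ℝ × ℝ | p.1 = p.2} = {x} := by
        ext y; simp [eq_comm]
      rw [he]; exact measure_singleton x
    simp [this]
  -- Claim C
  have claimC : (∫ p, H p ∂(μ.prod μ)) + (∫ p, H' p ∂(μ.prod μ)) = v * v := by
    rw [← integral_add hHint hH'int]
    have hae : ∀ᵐ p ∂(μ.prod μ), H p + H' p = g p.1 * g p.2 := by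
      have : ∀ᵐ p ∂(μ.prod μ), p.1 ≠ p.2 := by
        rw [Filter.eventually_iff, mem_ae_iff]
        have he : {x : ℝ × ℝ | ¬x.1 = x.2}ᶜ = {p : ℝ × ℝ | p.1 = p.2} := by
          ext p; simp
        rw [he]; exact hdiag
      filter_upwards [this] with p hp
      rcases lt_trichotomy p.1 p.2 with h | h | h
      · simp [hHdef, hH'def, h, not_lt.2 h.le]
      · exact absurd h hp
      · simp [hHdef, hH'def, h, not_lt.2 h.le]
    rw [integral_congr_ae hae, integral_prod_mul]
  have hQ : ∫ x, g x * F x ∂μ = v * v / 2 := by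
    have := claimC
    rw [claimB, claimA] at this
    linarith
  -- assemble
  have hsplit : ∫ x in Ioo a b, g x * (c + F x) =
      (∫ x, g x * c ∂μ) + ∫ x, g x * F x ∂μ := by
    rw [← integral_add (hgi.mul_const c) hgF']
    congr 1; funext x; ring
  rw [hsplit, integral_mul_const, hQ]
  have hv2 : ∫ x, g x ∂μ = v := rfl
  rw [hv2]
  ring


lemma euclid_comp_le {N : ℕ} (v : EuclideanSpace ℝ (Fin N)) (i : Fin N) : |v i| ≤ ‖v‖ := by
  rw [EuclideanSpace.norm_eq]
  rw [show |v i| = √(|v i|^2) by rw [Real.sqrt_sq_eq_abs, abs_abs]]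
  apply Real.sqrt_le_sqrt
  have : |v i|^2 = ‖v i‖^2 := by rw [Real.norm_eq_abs]
  rw [this]
  exact Finset.single_le_sum (f := fun j => ‖v j‖^2) (fun j _ => sq_nonneg _) (Finset.mem_univ i)




/-- let `D` be the operator `u ↦ u'` on a domain `S` (given as the graph
`{(u, u')}` of pairs of a function and its derivative) with `H¹₀ ⊆ dom D ⊆ H¹`.
If for some matrix `M` with `MᵀM ≤ 1` every `u ∈ dom D` satisfies the boundary
condition `M·u(1/2⁻) + u(-1/2⁺) = 0`, then `D` is accretive: `⟨Du, u⟩_{L²} ≥ 0`. -/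
theorem stmt_5 (N : ℕ)
    (S : Set ((ℝ → EuclideanSpace ℝ (Fin N)) × (ℝ → EuclideanSpace ℝ (Fin N))))
    (M : Matrix (Fin N) (Fin N) ℝ)
    (hdom : ∀ p ∈ S, IsH1Rep (-(1/2)) (1/2) p.1 p.2)
    (hH10 : ∀ u du : ℝ → EuclideanSpace ℝ (Fin N),
      IsH1Rep (-(1/2)) (1/2) u du → u (-(1/2)) = 0 → u (1/2) = 0 → (u, du) ∈ S)
    (hM : (1 - Mᵀ * M).PosSemidef)
    (hbc : ∀ p ∈ S, ∀ i,
      M.mulVec (fun j => p.1 (1/2) j) i + p.1 (-(1/2)) i = 0) :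
    ∀ p ∈ S, 0 ≤ ∫ x in Ioo (-(1/2) : ℝ) (1/2), (inner ℝ (p.2 x) (p.1 x) : ℝ) := by
  intro p hp
  obtain ⟨hu_cont, hdu_L2, hftc⟩ := hdom p hp
  set a : ℝ := -(1/2) with ha
  set b : ℝ := (1/2) with hb
  have hab : a ≤ b := by rw [ha, hb]; norm_num
  set u := p.1 with hu
  set du := p.2 with hdu
  haveI : IsFiniteMeasure (volume.restrict (Ioo a b)) :=
    ⟨by rw [Measure.restrict_apply_univ]; exact measure_Ioo_lt_top⟩
  have hduInt : IntegrableOn du (Ioo a b) := hdu_L2.integrable one_le_two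
  -- component integrability
  have hcomp : ∀ i : Fin N, IntegrableOn (fun x => du x i) (Ioo a b) := fun i =>
    (EuclideanSpace.proj (𝕜 := ℝ) i).integrable_comp hduInt
  -- componentwise FTC
  have hftc_i : ∀ x ∈ Icc a b, ∀ i, u x i = u a i + ∫ t in Ioo a x, du t i := by
    intro x hx i
    have h := hftc x hx
    have h2 : u x i = u a i + (∫ t in Ioo a x, du t) i := by rw [h]; rfl
    rw [h2]
    congr 1
    have hInt : IntegrableOn du (Ioo a x) := hduInt.mono_set (Ioo_subset_Ioo le_rfl hx.2)
    exact ((EuclideanSpace.proj (𝕜 := ℝ) i).integral_comp_comm hInt).symm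
  -- boundedness of u components
  obtain ⟨C, hC⟩ := (isCompact_Icc (a := a) (b := b)).exists_bound_of_continuousOn hu_cont
  have humeas : ∀ i : Fin N, AEStronglyMeasurable (fun x => u x i) (volume.restrict (Ioo a b)) :=
    fun i => (((EuclideanSpace.proj (𝕜 := ℝ) i).continuous.comp_continuousOn hu_cont).mono
      Ioo_subset_Icc_self).aestronglyMeasurable measurableSet_Ioo
  have hubdd : ∀ i : Fin N, ∀ᵐ x ∂(volume.restrict (Ioo a b)), ‖u x i‖ ≤ C := by
    intro i
    filter_upwards [ae_restrict_mem measurableSet_Ioo] with x hx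
    calc ‖u x i‖ = |u x i| := rfl
    _ ≤ ‖u x‖ := euclid_comp_le (u x) i
    _ ≤ C := hC x (Ioo_subset_Icc_self hx)
  have hmul : ∀ i : Fin N, Integrable (fun x => du x i * u x i)
      (volume.restrict (Ioo a b)) := by
    intro i
    have := (hcomp i).bdd_mul (humeas i) (hubdd i)
    simpa [mul_comm] using this
  -- rewrite inner product as sum
  have hinner : ∀ x, (inner ℝ (du x) (u x) : ℝ) = ∑ i, du x i * u x i := by
    intro x
    rw [PiLp.inner_apply]
    simp [RCLike.inner_apply, mul_comm]
  -- values and boundary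
  set w : Fin N → ℝ := fun j => u b j with hw
  have habmem : a ∈ Icc a b := left_mem_Icc.2 hab
  have hbbmem : b ∈ Icc a b := right_mem_Icc.2 hab
  -- the integral computed
  have hcalc : ∫ x in Ioo a b, (inner ℝ (du x) (u x) : ℝ) =
      ∑ i, (((u b i) ^ 2 - (u a i) ^ 2) / 2) := by
    calc ∫ x in Ioo a b, (inner ℝ (du x) (u x) : ℝ)
        = ∫ x in Ioo a b, ∑ i, du x i * u x i := by
          exact integral_congr_ae (Filter.Eventually.of_forall fun x => hinner x)
      _ = ∑ i, ∫ x in Ioo a b, du x i * u x i := by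
          exact integral_finset_sum _ fun i _ => hmul i
      _ = ∑ i, (((u b i) ^ 2 - (u a i) ^ 2) / 2) := by
          refine Finset.sum_congr rfl fun i _ => ?_
          have e1 : ∫ x in Ioo a b, du x i * u x i =
              ∫ x in Ioo a b, (fun t => du t i) x * (u a i + ∫ t in Ioo a x, du t i) := by
            refine integral_congr_ae ?_
            filter_upwards [ae_restrict_mem measurableSet_Ioo] with x hx
            rw [← hftc_i x (Ioo_subset_Icc_self hx) i]
          rw [e1, ftc_sq a b (u a i) hab (fun t => du t i) (hcomp i)]
          rw [← hftc_i b hbbmem i]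
  rw [hcalc]
  -- boundary condition gives u a i = -(M *ᵥ w) i
  have hua : ∀ i, u a i = -(M.mulVec w i) := by
    intro i
    have h := hbc p hp i
    have : M.mulVec w i + u a i = 0 := h
    linarith
  -- positivity from PSD
  have hpsd := hM.dotProduct_mulVec_nonneg w
  have hdot : star w ⬝ᵥ ((1 - Mᵀ * M).mulVec w) =
      w ⬝ᵥ w - (M.mulVec w) ⬝ᵥ (M.mulVec w) := by
    have hst : star w = w := by
      funext j; simp
    rw [hst, sub_mulVec, one_mulVec, dotProduct_sub]
    congr 1
    rw [← mulVec_mulVec, dotProduct_mulVec, vecMul_transpose]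
  rw [hdot] at hpsd
  have hsum : ∑ i, (((u b i) ^ 2 - (u a i) ^ 2) / 2) =
      (w ⬝ᵥ w - (M.mulVec w) ⬝ᵥ (M.mulVec w)) / 2 := by
    rw [dotProduct, dotProduct, ← Finset.sum_sub_distrib, ← Finset.sum_div]
    congr 1
    refine Finset.sum_congr rfl fun i _ => ?_
    rw [hua i]
    ring
  rw [hsum]
  positivity
end

section
/- Let V : L²(]a,b[; ℝᴺ) → L²(]-1/2,1/2[; ℝᴺ) be an invertible bounded operator such that V (P₁ ∂ₓ) V* = ∂ₓ, where P₁ ∈ ℝ^{N×N} is symmetric and invertible. Then there exists an invertible matrix C ∈ ℝ^{2N×2N} such that for all u ∈ H¹(]-1/2,1/2[; ℝᴺ), V*u ∈ H¹(]a,b[; ℝᴺ) and ((V*u)(b), (V*u)(a)) = C (u(1/2), u(-1/2)). Moreover C satisfies Cᵀ diag(P₁, -P₁) C = diag(1, -1). -/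
open MeasureTheory Set Matrix

/-- The graph of the operator `∂ₓ` with domain `H¹(]a,b[; ℝᴺ)` on
`L²(]a,b[; ℝᴺ)`: `(f,g)` belongs to it iff `f` has an `H¹` representative `u` with
derivative representing `g`. -/
def InGraphDeriv (N : ℕ) (a b : ℝ)
    (f g : Lp (EuclideanSpace ℝ (Fin N)) 2 (volume.restrict (Ioo a b))) : Prop :=
  ∃ u du : ℝ → EuclideanSpace ℝ (Fin N), IsH1Rep a b u du ∧
    (f : ℝ → EuclideanSpace ℝ (Fin N)) =ᵐ[volume.restrict (Ioo a b)] u ∧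
    (g : ℝ → EuclideanSpace ℝ (Fin N)) =ᵐ[volume.restrict (Ioo a b)] du

/-- The graph of the operator `P₁∂ₓ` with domain `H¹(]a,b[; ℝᴺ)`. -/
def InGraphP1Deriv (N : ℕ) (a b : ℝ) (P₁ : Matrix (Fin N) (Fin N) ℝ)
    (f g : Lp (EuclideanSpace ℝ (Fin N)) 2 (volume.restrict (Ioo a b))) : Prop :=
  ∃ u du : ℝ → EuclideanSpace ℝ (Fin N), IsH1Rep a b u du ∧
    (f : ℝ → EuclideanSpace ℝ (Fin N)) =ᵐ[volume.restrict (Ioo a b)] u ∧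
    (g : ℝ → EuclideanSpace ℝ (Fin N)) =ᵐ[volume.restrict (Ioo a b)]
      fun x => (WithLp.toLp 2 (fun i => P₁.mulVec (fun j => du x j) i) : EuclideanSpace ℝ (Fin N))


open Topology Filter

noncomputable section
namespace Stmt15Aux


lemma finMeas (a b : ℝ) : IsFiniteMeasure (volume.restrict (Ioo a b)) := by
  constructor
  rw [Measure.restrict_apply MeasurableSet.univ, Set.univ_inter, Real.volume_Ioo]
  exact ENNReal.ofReal_lt_top

lemma eqOn_of_ae_eq {a b : ℝ} (hab : a < b) {N : ℕ} {u v : ℝ → EuclideanSpace ℝ (Fin N)}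
    (hu : ContinuousOn u (Icc a b)) (hv : ContinuousOn v (Icc a b))
    (h : u =ᵐ[volume.restrict (Ioo a b)] v) : EqOn u v (Icc a b) := by
  have hIoo : EqOn u v (Ioo a b) := by
    intro x hx
    by_contra hne
    have hmem : Icc a b ∈ 𝓝 x :=
      mem_nhds_iff.2 ⟨Ioo a b, Ioo_subset_Icc_self, isOpen_Ioo, hx⟩
    have hcu : ContinuousAt u x := (hu x (Ioo_subset_Icc_self hx)).continuousAt hmem
    have hcv : ContinuousAt v x := (hv x (Ioo_subset_Icc_self hx)).continuousAt hmem
    have hev : ∀ᶠ y in 𝓝 x, u y - v y ≠ 0 :=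
      (hcu.sub hcv).eventually_ne (sub_ne_zero.2 hne)
    have hs : {y | u y ≠ v y} ∩ Ioo a b ∈ 𝓝 x := by
      filter_upwards [hev, isOpen_Ioo.mem_nhds hx] with y h1 h2
      exact ⟨fun hh => h1 (by rw [hh, sub_self]), h2⟩
    obtain ⟨t, hts, hto, hxt⟩ := mem_nhds_iff.1 hs
    have h0 : volume ({y | u y ≠ v y} ∩ Ioo a b) = 0 := by
      have := h
      rw [Filter.EventuallyEq, ae_iff] at this
      rw [Measure.restrict_apply' measurableSet_Ioo] at this
      exact this
    have hpos : 0 < volume t := hto.measure_pos volume ⟨x, hxt⟩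
    exact absurd (le_antisymm (h0 ▸ measure_mono hts) (zero_le)) hpos.ne'
  intro x hx
  rcases eq_or_ne x a with rfl | hxa
  · have hnb : (𝓝[Ioo x b] x).NeBot := by
      rw [← mem_closure_iff_nhdsWithin_neBot, closure_Ioo hab.ne]
      exact left_mem_Icc.2 hab.le
    have h1 : Filter.Tendsto u (𝓝[Ioo x b] x) (𝓝 (u x)) :=
      (hu x hx).mono_left (nhdsWithin_mono _ Ioo_subset_Icc_self)
    have h2 : Filter.Tendsto v (𝓝[Ioo x b] x) (𝓝 (v x)) :=
      (hv x hx).mono_left (nhdsWithin_mono _ Ioo_subset_Icc_self)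
    have h1' : Filter.Tendsto u (𝓝[Ioo x b] x) (𝓝 (v x)) := by
      refine h2.congr' ?_
      filter_upwards [self_mem_nhdsWithin] with y hy using (hIoo hy).symm
    exact tendsto_nhds_unique h1 h1'
  · rcases eq_or_ne x b with rfl | hxb
    · have hnb : (𝓝[Ioo a x] x).NeBot := by
        rw [← mem_closure_iff_nhdsWithin_neBot, closure_Ioo hab.ne]
        exact right_mem_Icc.2 hab.le
      have h1 : Filter.Tendsto u (𝓝[Ioo a x] x) (𝓝 (u x)) :=
        (hu x hx).mono_left (nhdsWithin_mono _ Ioo_subset_Icc_self)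
      have h2 : Filter.Tendsto v (𝓝[Ioo a x] x) (𝓝 (v x)) :=
        (hv x hx).mono_left (nhdsWithin_mono _ Ioo_subset_Icc_self)
      have h1' : Filter.Tendsto u (𝓝[Ioo a x] x) (𝓝 (v x)) := by
        refine h2.congr' ?_
        filter_upwards [self_mem_nhdsWithin] with y hy using (hIoo hy).symm
      exact tendsto_nhds_unique h1 h1'
    · exact hIoo ⟨lt_of_le_of_ne hx.1 (Ne.symm hxa), lt_of_le_of_ne hx.2 hxb⟩




lemma scalar_ibp {a b : ℝ} (hab : a < b) {f g f' g' : ℝ → ℝ}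
    (hf' : Integrable f' (volume.restrict (Ioo a b)))
    (hg' : Integrable g' (volume.restrict (Ioo a b)))
    (hf : ∀ x ∈ Icc a b, f x = f a + ∫ t in Ioo a x, f' t)
    (hg : ∀ x ∈ Icc a b, g x = g a + ∫ t in Ioo a x, g' t) :
    Integrable (fun x => f' x * g x + f x * g' x) (volume.restrict (Ioo a b)) ∧
    ∫ x in Ioo a b, (f' x * g x + f x * g' x) = f b * g b - f a * g a := by
  haveI := finMeas a b
  set μ := volume.restrict (Ioo a b) with hμ
  set F : ℝ → ℝ := fun x => ∫ t in Ioo a x, f' t with hF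
  set G : ℝ → ℝ := fun x => ∫ t in Ioo a x, g' t with hG
  set K : ℝ × ℝ → ℝ := {p : ℝ × ℝ | p.2 < p.1}.indicator (fun p => f' p.1 * g' p.2) with hK
  set K' : ℝ × ℝ → ℝ := {p : ℝ × ℝ | p.2 < p.1}.indicator (fun p => f' p.2 * g' p.1) with hK'
  set Q : ℝ × ℝ → ℝ := {p : ℝ × ℝ | p.1 < p.2}.indicator (fun p => f' p.1 * g' p.2) with hQ
  have hSmeas : MeasurableSet {p : ℝ × ℝ | p.2 < p.1} :=
    measurableSet_lt measurable_snd measurable_fst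
  have hKint : Integrable K (μ.prod μ) := (hf'.mul_prod hg').indicator hSmeas
  have hK'int : Integrable K' (μ.prod μ) := by
    have : Integrable (fun p : ℝ × ℝ => g' p.1 * f' p.2) (μ.prod μ) := hg'.mul_prod hf'
    exact (this.congr (Filter.Eventually.of_forall fun p => mul_comm _ _)).indicator hSmeas
  -- restricted measure identities
  have hrest : ∀ x ∈ Ioo a b, μ.restrict (Iio x) = volume.restrict (Ioo a x) := by
    intro x hx
    rw [hμ, Measure.restrict_restrict measurableSet_Iio]
    congr 1
    ext t
    constructor
    · rintro ⟨h1, h2, _⟩; exact ⟨h2, h1⟩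
    · rintro ⟨h1, h2⟩; exact ⟨h2, h1, h2.trans hx.2⟩
  -- step A
  have hAae : ∀ᵐ x ∂μ, (∫ t, K (x, t) ∂μ) = f' x * G x := by
    filter_upwards [ae_restrict_mem measurableSet_Ioo] with x hx
    have h1 : ∀ t, K (x, t) = (Iio x).indicator (fun t => f' x * g' t) t := by
      intro t
      simp only [hK, Set.indicator_apply, Set.mem_setOf_eq, Set.mem_Iio]
    calc (∫ t, K (x, t) ∂μ) = ∫ t, (Iio x).indicator (fun t => f' x * g' t) t ∂μ := by
          exact integral_congr_ae (Filter.Eventually.of_forall h1)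
      _ = ∫ t in Iio x, f' x * g' t ∂μ := integral_indicator measurableSet_Iio
      _ = ∫ t in Ioo a x, f' x * g' t := by rw [hrest x hx]
      _ = f' x * G x := by rw [hG, integral_const_mul]
  have hBae : ∀ᵐ x ∂μ, (∫ t, K' (x, t) ∂μ) = F x * g' x := by
    filter_upwards [ae_restrict_mem measurableSet_Ioo] with x hx
    have h1 : ∀ t, K' (x, t) = (Iio x).indicator (fun t => f' t * g' x) t := by
      intro t
      simp only [hK', Set.indicator_apply, Set.mem_setOf_eq, Set.mem_Iio]
    calc (∫ t, K' (x, t) ∂μ) = ∫ t, (Iio x).indicator (fun t => f' t * g' x) t ∂μ := by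
          exact integral_congr_ae (Filter.Eventually.of_forall h1)
      _ = ∫ t in Iio x, f' t * g' x ∂μ := integral_indicator measurableSet_Iio
      _ = ∫ t in Ioo a x, f' t * g' x := by rw [hrest x hx]
      _ = F x * g' x := by rw [hF, integral_mul_const]
  have hμuc : ∀ (R : ℝ × ℝ → ℝ), Integrable R (μ.prod μ) →
      ∫ x, (∫ t, R (x, t) ∂μ) ∂μ = ∫ p, R p ∂(μ.prod μ) := by
    intro R hR
    have := MeasureTheory.integral_integral (f := fun x t => R (x, t)) (μ := μ) (ν := μ) ?_
    · simpa using this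
    · exact hR
  have hIntA : Integrable (fun x => f' x * G x) μ :=
    (hKint.integral_prod_left).congr hAae
  have hIntB : Integrable (fun x => F x * g' x) μ :=
    (hK'int.integral_prod_left).congr hBae
  have hA : ∫ x, f' x * G x ∂μ = ∫ p, K p ∂(μ.prod μ) := by
    rw [← hμuc K hKint]
    exact (integral_congr_ae hAae).symm
  have hB : ∫ x, F x * g' x ∂μ = ∫ p, K' p ∂(μ.prod μ) := by
    rw [← hμuc K' hK'int]
    exact (integral_congr_ae hBae).symm
  -- swap
  have hC : ∫ p, K' p ∂(μ.prod μ) = ∫ p, Q p ∂(μ.prod μ) := by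
    have hswap : ∀ z : ℝ × ℝ, K' z = Q z.swap := by
      intro z
      simp only [hK', hQ, Set.indicator_apply, Set.mem_setOf_eq, Prod.fst_swap, Prod.snd_swap,
        Prod.swap]
    calc ∫ p, K' p ∂(μ.prod μ) = ∫ p, Q p.swap ∂(μ.prod μ) := by
          exact integral_congr_ae (Filter.Eventually.of_forall hswap)
      _ = ∫ p, Q p ∂(μ.prod μ) := MeasureTheory.integral_prod_swap Q
  -- diagonal is null
  have hdiag : (μ.prod μ) {p : ℝ × ℝ | p.1 = p.2} = 0 := by
    have hD : MeasurableSet {p : ℝ × ℝ | p.1 = p.2} :=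
      measurableSet_eq_fun measurable_fst measurable_snd
    rw [Measure.prod_apply hD]
    have : ∀ x : ℝ, μ (Prod.mk x ⁻¹' {p : ℝ × ℝ | p.1 = p.2}) = 0 := by
      intro x
      have : (Prod.mk x ⁻¹' {p : ℝ × ℝ | p.1 = p.2}) = {x} := by
        ext t; simp [eq_comm]
      rw [this]
      exact measure_singleton x
    simp [this]
  have hQint : Integrable Q (μ.prod μ) :=
    (hf'.mul_prod hg').indicator (measurableSet_lt measurable_fst measurable_snd)
  have hD : ∫ p, K p ∂(μ.prod μ) + ∫ p, Q p ∂(μ.prod μ) = F b * G b := by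
    have hsum : ∀ᵐ p ∂(μ.prod μ), K p + Q p = f' p.1 * g' p.2 := by
      have : ∀ᵐ p ∂(μ.prod μ), p ∉ {p : ℝ × ℝ | p.1 = p.2} :=
        measure_eq_zero_iff_ae_notMem.1 hdiag
      filter_upwards [this] with p hp
      have hne : p.1 ≠ p.2 := hp
      rcases lt_or_gt_of_ne hne with h | h
      · simp [hK, hQ, Set.indicator_apply, h, not_lt.2 h.le]
      · simp [hK, hQ, Set.indicator_apply, h, not_lt.2 h.le]
    calc ∫ p, K p ∂(μ.prod μ) + ∫ p, Q p ∂(μ.prod μ)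
        = ∫ p, (K p + Q p) ∂(μ.prod μ) := (integral_add hKint hQint).symm
      _ = ∫ p : ℝ × ℝ, f' p.1 * g' p.2 ∂(μ.prod μ) := integral_congr_ae hsum
      _ = (∫ x, f' x ∂μ) * ∫ x, g' x ∂μ := integral_prod_mul f' g'
      _ = F b * G b := by rw [hF, hG, hμ]
  have hEq : (fun x => f' x * g x + f x * g' x) =ᵐ[μ]
      fun x => g a * f' x + f a * g' x + (f' x * G x + F x * g' x) := by
    filter_upwards [ae_restrict_mem measurableSet_Ioo] with x hx
    have hfx : f x = f a + F x := hf x (Ioo_subset_Icc_self hx)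
    have hgx : g x = g a + G x := hg x (Ioo_subset_Icc_self hx)
    rw [hfx, hgx]; ring
  have hInt2 : Integrable
      (fun x => g a * f' x + f a * g' x + (f' x * G x + F x * g' x)) μ :=
    ((hf'.const_mul (g a)).add (hg'.const_mul (f a))).add (hIntA.add hIntB)
  have hfb : f b = f a + F b := hf b (right_mem_Icc.2 hab.le)
  have hgb : g b = g a + G b := hg b (right_mem_Icc.2 hab.le)
  refine ⟨hInt2.congr hEq.symm, ?_⟩
  calc ∫ x, (f' x * g x + f x * g' x) ∂μ
      = ∫ x, (g a * f' x + f a * g' x + (f' x * G x + F x * g' x)) ∂μ :=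
        integral_congr_ae hEq
    _ = (∫ x, (g a * f' x + f a * g' x) ∂μ) + ∫ x, (f' x * G x + F x * g' x) ∂μ :=
        integral_add ((hf'.const_mul (g a)).add (hg'.const_mul (f a))) (hIntA.add hIntB)
    _ = (g a * ∫ x, f' x ∂μ) + f a * ∫ x, g' x ∂μ
        + ((∫ x, f' x * G x ∂μ) + ∫ x, F x * g' x ∂μ) := by
        rw [integral_add (hf'.const_mul (g a)) (hg'.const_mul (f a)),
          integral_add hIntA hIntB, integral_const_mul, integral_const_mul]
    _ = g a * F b + f a * G b + F b * G b := by
        rw [hA, hB, hC]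
        rw [show (∫ x, f' x ∂μ) = F b by rw [hF, hμ], show (∫ x, g' x ∂μ) = G b by rw [hG, hμ]]
        rw [hD]
    _ = f b * g b - f a * g a := by rw [hfb, hgb]; ring


lemma memLp_two_of_isH1Rep {N : ℕ} {a b : ℝ} {u du : ℝ → EuclideanSpace ℝ (Fin N)}
    (h : IsH1Rep a b u du) : MemLp u 2 (volume.restrict (Ioo a b)) := by
  haveI := finMeas a b
  obtain ⟨M, hM⟩ := isCompact_Icc.exists_bound_of_continuousOn h.1
  have hm : AEStronglyMeasurable u (volume.restrict (Ioo a b)) :=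
    (h.1.aestronglyMeasurable measurableSet_Icc).mono_measure
      (Measure.restrict_mono Ioo_subset_Icc_self le_rfl)
  refine MemLp.of_bound hm M ?_
  filter_upwards [ae_restrict_mem measurableSet_Ioo] with x hx
  exact hM x (Ioo_subset_Icc_self hx)

lemma integrable_of_isH1Rep {N : ℕ} {a b : ℝ} {u du : ℝ → EuclideanSpace ℝ (Fin N)}
    (h : IsH1Rep a b u du) : Integrable du (volume.restrict (Ioo a b)) := by
  haveI := finMeas a b
  exact h.2.1.integrable one_le_two

lemma isH1Rep_add {N : ℕ} {a b : ℝ} {u du v dv : ℝ → EuclideanSpace ℝ (Fin N)}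
    (hu : IsH1Rep a b u du) (hv : IsH1Rep a b v dv) :
    IsH1Rep a b (u + v) (du + dv) := by
  refine ⟨hu.1.add hv.1, hu.2.1.add hv.2.1, ?_⟩
  intro x hx
  have h1 : IntegrableOn du (Ioo a x) volume :=
    MeasureTheory.IntegrableOn.mono_set (integrable_of_isH1Rep hu) (Ioo_subset_Ioo_right hx.2)
  have h2 : IntegrableOn dv (Ioo a x) volume :=
    MeasureTheory.IntegrableOn.mono_set (integrable_of_isH1Rep hv) (Ioo_subset_Ioo_right hx.2)
  simp only [Pi.add_apply]
  rw [hu.2.2 x hx, hv.2.2 x hx, integral_add h1 h2]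
  abel

lemma isH1Rep_sub {N : ℕ} {a b : ℝ} {u du v dv : ℝ → EuclideanSpace ℝ (Fin N)}
    (hu : IsH1Rep a b u du) (hv : IsH1Rep a b v dv) :
    IsH1Rep a b (u - v) (du - dv) := by
  refine ⟨hu.1.sub hv.1, hu.2.1.sub hv.2.1, ?_⟩
  intro x hx
  have h1 : IntegrableOn du (Ioo a x) volume :=
    MeasureTheory.IntegrableOn.mono_set (integrable_of_isH1Rep hu) (Ioo_subset_Ioo_right hx.2)
  have h2 : IntegrableOn dv (Ioo a x) volume :=
    MeasureTheory.IntegrableOn.mono_set (integrable_of_isH1Rep hv) (Ioo_subset_Ioo_right hx.2)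
  simp only [Pi.sub_apply]
  rw [hu.2.2 x hx, hv.2.2 x hx, integral_sub h1 h2]
  abel

lemma isH1Rep_smul {N : ℕ} {a b : ℝ} (c : ℝ) {u du : ℝ → EuclideanSpace ℝ (Fin N)}
    (hu : IsH1Rep a b u du) : IsH1Rep a b (c • u) (c • du) := by
  refine ⟨hu.1.const_smul c, hu.2.1.const_smul c, ?_⟩
  intro x hx
  simp only [Pi.smul_apply]
  rw [hu.2.2 x hx, integral_smul]
  module

/-- matrix multiplication as a continuous linear map on Euclidean space -/
def matCLM (N : ℕ) (M : Matrix (Fin N) (Fin N) ℝ) :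
    EuclideanSpace ℝ (Fin N) →L[ℝ] EuclideanSpace ℝ (Fin N) :=
  LinearMap.toContinuousLinearMap
    { toFun := fun x => (WithLp.toLp 2 (fun i => M.mulVec (fun j => x j) i) : EuclideanSpace ℝ (Fin N))
      map_add' := by
        intro x y
        ext i
        show M.mulVec ((fun j => x j) + fun j => y j) i = _
        rw [Matrix.mulVec_add]; rfl
      map_smul' := by
        intro c x
        ext i
        show M.mulVec (c • fun j => x j) i = _
        rw [Matrix.mulVec_smul]; rfl }

lemma matCLM_apply {N : ℕ} (M : Matrix (Fin N) (Fin N) ℝ) (x : EuclideanSpace ℝ (Fin N)) :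
    matCLM N M x = (WithLp.toLp 2 (fun i => M.mulVec (fun j => x j) i) : EuclideanSpace ℝ (Fin N)) := rfl

lemma isH1Rep_mat {N : ℕ} {a b : ℝ} (M : Matrix (Fin N) (Fin N) ℝ)
    {u du : ℝ → EuclideanSpace ℝ (Fin N)} (hu : IsH1Rep a b u du) :
    IsH1Rep a b (fun x => matCLM N M (u x)) (fun x => matCLM N M (du x)) := by
  refine ⟨(matCLM N M).continuous.comp_continuousOn hu.1, ?_, ?_⟩
  · exact (matCLM N M).comp_memLp' hu.2.1
  · intro x hx
    have h1 : IntegrableOn du (Ioo a x) volume :=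
      MeasureTheory.IntegrableOn.mono_set (integrable_of_isH1Rep hu) (Ioo_subset_Ioo_right hx.2)
    show matCLM N M (u x) = matCLM N M (u a) + ∫ t in Ioo a x, matCLM N M (du t)
    rw [hu.2.2 x hx, map_add, ContinuousLinearMap.integral_comp_comm _ h1]

lemma boundary_eq {N : ℕ} {a b : ℝ} (hab : a < b)
    {u du v dv : ℝ → EuclideanSpace ℝ (Fin N)}
    (hu : IsH1Rep a b u du) (hv : IsH1Rep a b v dv)
    (h : u =ᵐ[volume.restrict (Ioo a b)] v) : u a = v a ∧ u b = v b :=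
  ⟨eqOn_of_ae_eq hab hu.1 hv.1 h (left_mem_Icc.2 hab.le),
   eqOn_of_ae_eq hab hu.1 hv.1 h (right_mem_Icc.2 hab.le)⟩

lemma inner_integrable {N : ℕ} {a b : ℝ} {φ ψ : ℝ → EuclideanSpace ℝ (Fin N)}
    (hφ : MemLp φ 2 (volume.restrict (Ioo a b)))
    (hψ : MemLp ψ 2 (volume.restrict (Ioo a b))) :
    Integrable (fun x => (inner ℝ (φ x) (ψ x) : ℝ)) (volume.restrict (Ioo a b)) := by
  have h := L2.integrable_inner (𝕜 := ℝ) (hφ.toLp φ) (hψ.toLp ψ)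
  refine h.congr ?_
  filter_upwards [hφ.coeFn_toLp, hψ.coeFn_toLp] with x h1 h2
  rw [h1, h2]

lemma ibp {N : ℕ} {a b : ℝ} (hab : a < b)
    {u du v dv : ℝ → EuclideanSpace ℝ (Fin N)}
    (hu : IsH1Rep a b u du) (hv : IsH1Rep a b v dv) :
    ∫ x in Ioo a b, ((inner ℝ (du x) (v x) : ℝ) + (inner ℝ (u x) (dv x) : ℝ)) =
      (inner ℝ (u b) (v b) : ℝ) - (inner ℝ (u a) (v a) : ℝ) := by
  haveI := finMeas a b
  have comp : ∀ (w dw : ℝ → EuclideanSpace ℝ (Fin N)), IsH1Rep a b w dw → ∀ i : Fin N,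
      (∀ x ∈ Icc a b, w x i = w a i + ∫ t in Ioo a x, dw t i) ∧
        Integrable (fun x => dw x i) (volume.restrict (Ioo a b)) := by
    intro w dw hw i
    constructor
    · intro x hx
      have h1 : IntegrableOn dw (Ioo a x) volume :=
        MeasureTheory.IntegrableOn.mono_set (integrable_of_isH1Rep hw) (Ioo_subset_Ioo_right hx.2)
      have := congrArg (fun z => EuclideanSpace.proj (𝕜 := ℝ) i z) (hw.2.2 x hx)
      simp only [map_add] at this
      rw [← ContinuousLinearMap.integral_comp_comm _ h1] at this
      exact this
    · exact (EuclideanSpace.proj (𝕜 := ℝ) i).integrable_comp (integrable_of_isH1Rep hw)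
  have main : ∀ i : Fin N,
      Integrable (fun x => du x i * v x i + u x i * dv x i) (volume.restrict (Ioo a b)) ∧
      ∫ x in Ioo a b, (du x i * v x i + u x i * dv x i) =
        u b i * v b i - u a i * v a i := by
    intro i
    exact scalar_ibp hab ((comp u du hu i).2) ((comp v dv hv i).2)
      ((comp u du hu i).1) ((comp v dv hv i).1)
  have hpt : ∀ x : ℝ, ((inner ℝ (du x) (v x) : ℝ) + (inner ℝ (u x) (dv x) : ℝ)) =
      ∑ i : Fin N, (du x i * v x i + u x i * dv x i) := by
    intro x
    simp only [PiLp.inner_apply, RCLike.inner_apply', conj_trivial, Finset.sum_add_distrib]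
  calc ∫ x in Ioo a b, ((inner ℝ (du x) (v x) : ℝ) + (inner ℝ (u x) (dv x) : ℝ))
      = ∫ x in Ioo a b, ∑ i : Fin N, (du x i * v x i + u x i * dv x i) := by
        exact integral_congr_ae (Filter.Eventually.of_forall hpt)
    _ = ∑ i : Fin N, ∫ x in Ioo a b, (du x i * v x i + u x i * dv x i) :=
        integral_finset_sum _ (fun i _ => (main i).1)
    _ = ∑ i : Fin N, (u b i * v b i - u a i * v a i) := by
        exact Finset.sum_congr rfl (fun i _ => (main i).2)
    _ = (inner ℝ (u b) (v b) : ℝ) - (inner ℝ (u a) (v a) : ℝ) := by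
        simp only [PiLp.inner_apply, RCLike.inner_apply', conj_trivial, Finset.sum_sub_distrib]

def linF {N : ℕ} (a b : ℝ) (y₀ y₁ : EuclideanSpace ℝ (Fin N)) : ℝ → EuclideanSpace ℝ (Fin N) :=
  fun x => y₀ + ((x - a) / (b - a)) • (y₁ - y₀)

lemma linF_left {N : ℕ} (a b : ℝ) (y₀ y₁ : EuclideanSpace ℝ (Fin N)) :
    linF a b y₀ y₁ a = y₀ := by simp [linF]

lemma linF_right {N : ℕ} {a b : ℝ} (hab : a < b) (y₀ y₁ : EuclideanSpace ℝ (Fin N)) :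
    linF a b y₀ y₁ b = y₁ := by
  simp [linF, div_self (sub_ne_zero.2 hab.ne')]

lemma isH1Rep_linF {N : ℕ} {a b : ℝ} (hab : a < b) (y₀ y₁ : EuclideanSpace ℝ (Fin N)) :
    IsH1Rep a b (linF a b y₀ y₁) (fun _ => (b - a)⁻¹ • (y₁ - y₀)) := by
  haveI := finMeas a b
  refine ⟨?_, memLp_const _, ?_⟩
  · exact (continuous_const.add
      (((continuous_id.sub continuous_const).div_const _).smul continuous_const)).continuousOn
  · intro x hx
    rw [setIntegral_const, Real.volume_real_Ioo_of_le hx.1,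
      linF_left]
    simp only [linF, smul_smul, div_eq_mul_inv]

lemma linF_add {N : ℕ} (a b : ℝ) (y₀ y₁ z₀ z₁ : EuclideanSpace ℝ (Fin N)) :
    linF a b (y₀ + z₀) (y₁ + z₁) = linF a b y₀ y₁ + linF a b z₀ z₁ := by
  funext x
  show y₀ + z₀ + ((x - a) / (b - a)) • (y₁ + z₁ - (y₀ + z₀)) = _
  simp only [Pi.add_apply, linF]
  module

lemma linF_smul {N : ℕ} (a b : ℝ) (c : ℝ) (y₀ y₁ : EuclideanSpace ℝ (Fin N)) :
    linF a b (c • y₀) (c • y₁) = c • linF a b y₀ y₁ := by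
  funext x
  show c • y₀ + ((x - a) / (b - a)) • (c • y₁ - c • y₀) = _
  simp only [Pi.smul_apply, linF]
  module

lemma inner_matCLM_comm {N : ℕ} {P : Matrix (Fin N) (Fin N) ℝ} (hP : P.IsHermitian)
    (x y : EuclideanSpace ℝ (Fin N)) :
    (inner ℝ (matCLM N P x) y : ℝ) = inner ℝ x (matCLM N P y) := by
  have hPt : Pᵀ = P := by
    have := hP.eq
    rwa [Matrix.conjTranspose_eq_transpose_of_trivial] at this
  simp only [PiLp.inner_apply, RCLike.inner_apply', conj_trivial]
  show ((P.mulVec fun j => x j) ⬝ᵥ fun j => y j) = ((fun j => x j) ⬝ᵥ P.mulVec fun j => y j)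
  rw [dotProduct_mulVec, ← hPt, Matrix.vecMul_transpose, hPt, dotProduct_comm]

lemma elim_dotProduct {N : ℕ} (x y z w : Fin N → ℝ) :
    (Sum.elim x y) ⬝ᵥ (Sum.elim z w) = x ⬝ᵥ z + y ⬝ᵥ w := by
  simp [dotProduct, Fintype.sum_sum_type]

lemma inner_eq_dot {N : ℕ} (x y : EuclideanSpace ℝ (Fin N)) :
    (inner ℝ x y : ℝ) = (fun i => x i) ⬝ᵥ (fun i => y i) := by
  simp [PiLp.inner_apply, RCLike.inner_apply', dotProduct]
  exact Finset.sum_congr rfl fun i _ => mul_comm _ _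

lemma dotD {N : ℕ} (P₁ : Matrix (Fin N) (Fin N) ℝ) (x y z w : EuclideanSpace ℝ (Fin N)) :
    (Sum.elim (fun i => x i) (fun i => y i)) ⬝ᵥ
      ((Matrix.fromBlocks P₁ 0 0 (-P₁)).mulVec (Sum.elim (fun i => z i) (fun i => w i)))
    = (inner ℝ x (matCLM N P₁ z) : ℝ) - (inner ℝ y (matCLM N P₁ w) : ℝ) := by
  rw [Matrix.fromBlocks_mulVec]
  simp only [Sum.elim_comp_inl, Sum.elim_comp_inr, Matrix.zero_mulVec, add_zero, zero_add,
    Matrix.neg_mulVec]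
  rw [elim_dotProduct, dotProduct_neg, inner_eq_dot, inner_eq_dot, sub_eq_add_neg]
  rfl

def toE {N : ℕ} (v : Fin N → ℝ) : EuclideanSpace ℝ (Fin N) := WithLp.toLp 2 v

lemma dotJ {N : ℕ} (p q : Fin N ⊕ Fin N → ℝ) :
    p ⬝ᵥ ((Matrix.fromBlocks (1 : Matrix (Fin N) (Fin N) ℝ) 0 0 (-1)).mulVec q)
    = (inner ℝ (toE fun i => p (Sum.inl i)) (toE fun i => q (Sum.inl i)) : ℝ)
      - (inner ℝ (toE fun i => p (Sum.inr i)) (toE fun i => q (Sum.inr i)) : ℝ) := by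
  have hp : p = Sum.elim (fun i => p (Sum.inl i)) (fun i => p (Sum.inr i)) := by
    funext x; cases x <;> rfl
  have hq : q = Sum.elim (fun i => q (Sum.inl i)) (fun i => q (Sum.inr i)) := by
    funext x; cases x <;> rfl
  conv_lhs => rw [hp, hq]
  rw [Matrix.fromBlocks_mulVec]
  simp only [Sum.elim_comp_inl, Sum.elim_comp_inr, Matrix.zero_mulVec, add_zero, zero_add,
    Matrix.neg_mulVec, Matrix.one_mulVec]
  rw [elim_dotProduct, dotProduct_neg, inner_eq_dot, inner_eq_dot, sub_eq_add_neg]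
  rfl

end Stmt15Aux
end
set_option maxHeartbeats 1000000 in
/-- if `V : L²(]a,b[;ℝᴺ) → L²(]-1/2,1/2[;ℝᴺ)` is an invertible bounded
operator with `V (P₁∂ₓ) V* = ∂ₓ` (equality of unbounded operators, i.e. of graphs),
`P₁` symmetric invertible, then there is an invertible `C ∈ ℝ^{2N×2N}` mapping the
boundary values `(u(1/2), u(-1/2))` of `u ∈ H¹` to the boundary values
`((V*u)(b), (V*u)(a))`, and `Cᵀ diag(P₁,-P₁) C = diag(1,-1)`. -/
theorem stmt_15 (N : ℕ) (a b : ℝ) (hab : a < b) (P₁ : Matrix (Fin N) (Fin N) ℝ)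
    (hsym : P₁.IsHermitian) (hinv : IsUnit P₁.det)
    (V : Lp (EuclideanSpace ℝ (Fin N)) 2 (volume.restrict (Ioo a b)) ≃L[ℝ]
         Lp (EuclideanSpace ℝ (Fin N)) 2 (volume.restrict (Ioo (-(1/2) : ℝ) (1/2))))
    (hV : ∀ f g : Lp (EuclideanSpace ℝ (Fin N)) 2
        (volume.restrict (Ioo (-(1/2) : ℝ) (1/2))),
      InGraphDeriv N (-(1/2)) (1/2) f g ↔
        ∃ h, InGraphP1Deriv N a b P₁
            (ContinuousLinearMap.adjoint V.toContinuousLinearMap f) h ∧ g = V h) :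
    ∃ C : Matrix (Fin N ⊕ Fin N) (Fin N ⊕ Fin N) ℝ, IsUnit C ∧
      (∀ (f : Lp (EuclideanSpace ℝ (Fin N)) 2
            (volume.restrict (Ioo (-(1/2) : ℝ) (1/2))))
          (u du : ℝ → EuclideanSpace ℝ (Fin N)),
        IsH1Rep (-(1/2)) (1/2) u du →
        (f : ℝ → EuclideanSpace ℝ (Fin N)) =ᵐ[volume.restrict (Ioo (-(1/2) : ℝ) (1/2))] u →
        ∃ w dw : ℝ → EuclideanSpace ℝ (Fin N), IsH1Rep a b w dw ∧
          ((ContinuousLinearMap.adjoint V.toContinuousLinearMap f :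
              Lp (EuclideanSpace ℝ (Fin N)) 2 (volume.restrict (Ioo a b))) :
            ℝ → EuclideanSpace ℝ (Fin N)) =ᵐ[volume.restrict (Ioo a b)] w ∧
          Sum.elim (fun i => w b i) (fun i => w a i) =
            C.mulVec (Sum.elim (fun i => u (1/2) i) (fun i => u (-(1/2)) i))) ∧
      Cᵀ * Matrix.fromBlocks P₁ 0 0 (-P₁) * C = Matrix.fromBlocks 1 0 0 (-1) := by
    classical
  haveI := Stmt15Aux.finMeas a b
  haveI := Stmt15Aux.finMeas (-(1/2) : ℝ) (1/2)
  have hhalf : (-(1/2) : ℝ) < 1/2 := by norm_num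
  set A := ContinuousLinearMap.adjoint V.toContinuousLinearMap with hA
  -- STEP 1
  have step1 : ∀ (f : Lp (EuclideanSpace ℝ (Fin N)) 2
        (volume.restrict (Ioo (-(1/2) : ℝ) (1/2))))
      (u du : ℝ → EuclideanSpace ℝ (Fin N)), IsH1Rep (-(1/2)) (1/2) u du →
      (f : ℝ → EuclideanSpace ℝ (Fin N)) =ᵐ[volume.restrict (Ioo (-(1/2) : ℝ) (1/2))] u →
      ∃ w dw : ℝ → EuclideanSpace ℝ (Fin N), IsH1Rep a b w dw ∧
        (A f : ℝ → EuclideanSpace ℝ (Fin N)) =ᵐ[volume.restrict (Ioo a b)] w ∧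
        ∀ (f' : Lp (EuclideanSpace ℝ (Fin N)) 2
            (volume.restrict (Ioo (-(1/2) : ℝ) (1/2))))
          (u' du' w' dw' : ℝ → EuclideanSpace ℝ (Fin N)),
          IsH1Rep (-(1/2)) (1/2) u' du' →
          (f' : ℝ → EuclideanSpace ℝ (Fin N)) =ᵐ[volume.restrict (Ioo (-(1/2) : ℝ) (1/2))] u' →
          IsH1Rep a b w' dw' →
          (A f' : ℝ → EuclideanSpace ℝ (Fin N)) =ᵐ[volume.restrict (Ioo a b)] w' →
          (inner ℝ (w b) (Stmt15Aux.matCLM N P₁ (w' b)) : ℝ)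
            - (inner ℝ (w a) (Stmt15Aux.matCLM N P₁ (w' a)) : ℝ)
          = (inner ℝ (u (1/2)) (u' (1/2)) : ℝ) - (inner ℝ (u (-(1/2))) (u' (-(1/2))) : ℝ) := by
    intro f u du hu hf
    obtain ⟨h, hP, hgV⟩ := (hV f (hu.2.1.toLp du)).1 ⟨u, du, hu, hf, hu.2.1.coeFn_toLp⟩
    obtain ⟨w, dw, hw, hwf, hhdw⟩ := hP
    refine ⟨w, dw, hw, hwf, ?_⟩
    intro f' u' du' w' dw' hu' hf' hw' hwf'
    obtain ⟨h', hP', hgV'⟩ := (hV f' (hu'.2.1.toLp du')).1 ⟨u', du', hu', hf', hu'.2.1.coeFn_toLp⟩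
    obtain ⟨w₀, dw₀, hw₀, hw₀f, hhdw₀⟩ := hP'
    have hbdry := Stmt15Aux.boundary_eq hab hw₀ hw' (hw₀f.symm.trans hwf')
    -- first inner product, two ways
    have e1 : (inner ℝ (hu.2.1.toLp du) f' : ℝ)
        = ∫ x in Ioo (-(1/2) : ℝ) (1/2), (inner ℝ (du x) (u' x) : ℝ) := by
      rw [L2.inner_def]
      refine integral_congr_ae ?_
      filter_upwards [hu.2.1.coeFn_toLp, hf'] with x h1 h2
      rw [h1, h2]
    have e2 : (inner ℝ (hu.2.1.toLp du) f' : ℝ)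
        = ∫ x in Ioo a b, (inner ℝ (Stmt15Aux.matCLM N P₁ (dw x)) (w₀ x) : ℝ) := by
      rw [hgV]
      have h3 : (inner ℝ (V.toContinuousLinearMap h) f' : ℝ) = inner ℝ h (A f') := by
        rw [hA]
        exact (real_inner_comm _ _).trans
          (((ContinuousLinearMap.adjoint_inner_left V.toContinuousLinearMap h f').symm).trans
            (real_inner_comm _ _))
      rw [show ((V h : Lp (EuclideanSpace ℝ (Fin N)) 2
          (volume.restrict (Ioo (-(1/2) : ℝ) (1/2))))) = V.toContinuousLinearMap h from rfl,
        h3, L2.inner_def]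
      refine integral_congr_ae ?_
      filter_upwards [hhdw, hw₀f] with x h1 h2
      rw [h1, h2]; rfl
    -- second inner product, two ways
    have e3 : (inner ℝ f (hu'.2.1.toLp du') : ℝ)
        = ∫ x in Ioo (-(1/2) : ℝ) (1/2), (inner ℝ (u x) (du' x) : ℝ) := by
      rw [L2.inner_def]
      refine integral_congr_ae ?_
      filter_upwards [hu'.2.1.coeFn_toLp, hf] with x h1 h2
      rw [h1, h2]
    have e4 : (inner ℝ f (hu'.2.1.toLp du') : ℝ)
        = ∫ x in Ioo a b, (inner ℝ (w x) (Stmt15Aux.matCLM N P₁ (dw₀ x)) : ℝ) := by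
      rw [hgV']
      have h3 : (inner ℝ f (V.toContinuousLinearMap h') : ℝ) = inner ℝ (A f) h' := by
        rw [hA, ContinuousLinearMap.adjoint_inner_left]
      rw [show ((V h' : Lp (EuclideanSpace ℝ (Fin N)) 2
          (volume.restrict (Ioo (-(1/2) : ℝ) (1/2))))) = V.toContinuousLinearMap h' from rfl,
        h3, L2.inner_def]
      refine integral_congr_ae ?_
      filter_upwards [hwf, hhdw₀] with x h1 h2
      rw [h1, h2]; rfl
    -- IBP on the left interval
    have hl : ∫ x in Ioo (-(1/2) : ℝ) (1/2),
        ((inner ℝ (du x) (u' x) : ℝ) + (inner ℝ (u x) (du' x) : ℝ))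
        = (inner ℝ (u (1/2)) (u' (1/2)) : ℝ) - (inner ℝ (u (-(1/2))) (u' (-(1/2))) : ℝ) :=
      Stmt15Aux.ibp hhalf hu hu'
    have hlsplit : ∫ x in Ioo (-(1/2) : ℝ) (1/2),
        ((inner ℝ (du x) (u' x) : ℝ) + (inner ℝ (u x) (du' x) : ℝ))
        = (∫ x in Ioo (-(1/2) : ℝ) (1/2), (inner ℝ (du x) (u' x) : ℝ))
          + ∫ x in Ioo (-(1/2) : ℝ) (1/2), (inner ℝ (u x) (du' x) : ℝ) :=
      integral_add (Stmt15Aux.inner_integrable hu.2.1 (Stmt15Aux.memLp_two_of_isH1Rep hu'))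
        (Stmt15Aux.inner_integrable (Stmt15Aux.memLp_two_of_isH1Rep hu) hu'.2.1)
    -- IBP on the right interval, with P₁ applied
    have hr : ∫ x in Ioo a b,
        ((inner ℝ (dw x) (Stmt15Aux.matCLM N P₁ (w₀ x)) : ℝ)
          + (inner ℝ (w x) (Stmt15Aux.matCLM N P₁ (dw₀ x)) : ℝ))
        = (inner ℝ (w b) (Stmt15Aux.matCLM N P₁ (w₀ b)) : ℝ)
          - (inner ℝ (w a) (Stmt15Aux.matCLM N P₁ (w₀ a)) : ℝ) :=
      Stmt15Aux.ibp hab hw (Stmt15Aux.isH1Rep_mat P₁ hw₀)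
    have hrsplit : ∫ x in Ioo a b,
        ((inner ℝ (dw x) (Stmt15Aux.matCLM N P₁ (w₀ x)) : ℝ)
          + (inner ℝ (w x) (Stmt15Aux.matCLM N P₁ (dw₀ x)) : ℝ))
        = (∫ x in Ioo a b, (inner ℝ (dw x) (Stmt15Aux.matCLM N P₁ (w₀ x)) : ℝ))
          + ∫ x in Ioo a b, (inner ℝ (w x) (Stmt15Aux.matCLM N P₁ (dw₀ x)) : ℝ) :=
      integral_add
        (Stmt15Aux.inner_integrable hw.2.1
          ((Stmt15Aux.matCLM N P₁).comp_memLp' (Stmt15Aux.memLp_two_of_isH1Rep hw₀)))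
        (Stmt15Aux.inner_integrable (Stmt15Aux.memLp_two_of_isH1Rep hw)
          ((Stmt15Aux.matCLM N P₁).comp_memLp' hw₀.2.1))
    have hswap : (∫ x in Ioo a b, (inner ℝ (Stmt15Aux.matCLM N P₁ (dw x)) (w₀ x) : ℝ))
        = ∫ x in Ioo a b, (inner ℝ (dw x) (Stmt15Aux.matCLM N P₁ (w₀ x)) : ℝ) :=
      integral_congr_ae (Filter.Eventually.of_forall fun x =>
        Stmt15Aux.inner_matCLM_comm hsym (dw x) (w₀ x))
    rw [hbdry.1, hbdry.2] at hr
    rw [← hr, hrsplit, ← hswap, ← e2, ← e4, e1, e3, ← hlsplit, hl]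
  -- V∗ ∘ (V.symm)∗ = id
  have hVs : ∀ ψm : Lp (EuclideanSpace ℝ (Fin N)) 2 (volume.restrict (Ioo a b)),
      A (ContinuousLinearMap.adjoint V.symm.toContinuousLinearMap ψm) = ψm := by
    intro ψm
    rw [hA, ← ContinuousLinearMap.comp_apply, ← ContinuousLinearMap.adjoint_comp]
    have hid : V.symm.toContinuousLinearMap.comp V.toContinuousLinearMap
        = ContinuousLinearMap.id ℝ _ := by ext x; simp
    rw [hid, ContinuousLinearMap.adjoint_id, ContinuousLinearMap.id_apply]
  -- STEP 2
  have step2 : ∀ (f : Lp (EuclideanSpace ℝ (Fin N)) 2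
        (volume.restrict (Ioo (-(1/2) : ℝ) (1/2))))
      (u du w dw : ℝ → EuclideanSpace ℝ (Fin N)), IsH1Rep (-(1/2)) (1/2) u du →
      (f : ℝ → EuclideanSpace ℝ (Fin N)) =ᵐ[volume.restrict (Ioo (-(1/2) : ℝ) (1/2))] u →
      IsH1Rep a b w dw →
      (A f : ℝ → EuclideanSpace ℝ (Fin N)) =ᵐ[volume.restrict (Ioo a b)] w →
      u (1/2) = 0 → u (-(1/2)) = 0 → w b = 0 ∧ w a = 0 := by
    intro f u du w dw hu hf hw hwf hu1 hu2
    obtain ⟨w₀, dw₀, hw₀, hw₀f, hbil⟩ := step1 f u du hu hf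
    have hb := Stmt15Aux.boundary_eq hab hw₀ hw (hw₀f.symm.trans hwf)
    have key : ∀ y₀ y₁ : EuclideanSpace ℝ (Fin N),
        (inner ℝ (w₀ b) (Stmt15Aux.matCLM N P₁ y₁) : ℝ)
          - (inner ℝ (w₀ a) (Stmt15Aux.matCLM N P₁ y₀) : ℝ) = 0 := by
      intro y₀ y₁
      have hψ := Stmt15Aux.isH1Rep_linF hab y₀ y₁
      have hψm := Stmt15Aux.memLp_two_of_isH1Rep hψ
      have hAf' : A (ContinuousLinearMap.adjoint V.symm.toContinuousLinearMap
          (hψm.toLp (Stmt15Aux.linF a b y₀ y₁))) = hψm.toLp (Stmt15Aux.linF a b y₀ y₁) := hVs _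
      have hm' : MemLp (fun x => Stmt15Aux.matCLM N P₁
            ((fun _ : ℝ => (b - a)⁻¹ • (y₁ - y₀)) x)) 2 (volume.restrict (Ioo a b)) :=
        (Stmt15Aux.matCLM N P₁).comp_memLp' hψ.2.1
      obtain ⟨u', du', hu', hfu', -⟩ :=
        (hV (ContinuousLinearMap.adjoint V.symm.toContinuousLinearMap
            (hψm.toLp (Stmt15Aux.linF a b y₀ y₁))) (V (hm'.toLp _))).2
          ⟨hm'.toLp _,
            ⟨Stmt15Aux.linF a b y₀ y₁, fun _ => (b - a)⁻¹ • (y₁ - y₀), hψ,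
              by rw [hAf']; exact hψm.coeFn_toLp, hm'.coeFn_toLp⟩, rfl⟩
      have hbw := hbil _ u' du' (Stmt15Aux.linF a b y₀ y₁) (fun _ => (b - a)⁻¹ • (y₁ - y₀))
        hu' hfu' hψ (by rw [hAf']; exact hψm.coeFn_toLp)
      rw [Stmt15Aux.linF_right hab, Stmt15Aux.linF_left, hu1, hu2, inner_zero_left,
        inner_zero_left, sub_zero] at hbw
      exact hbw
    have hInv := Matrix.mul_nonsing_inv P₁ hinv
    have hwb : w₀ b = 0 := by
      have h1 := key 0 ((WithLp.toLp 2 (fun i => (P₁⁻¹.mulVec (fun j => w₀ b j)) i) :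
        EuclideanSpace ℝ (Fin N)))
      have h2 : Stmt15Aux.matCLM N P₁ ((WithLp.toLp 2 (fun i => (P₁⁻¹.mulVec (fun j => w₀ b j)) i) :
          EuclideanSpace ℝ (Fin N))) = w₀ b := by
        ext i
        show (P₁.mulVec fun j => (P₁⁻¹.mulVec fun j => w₀ b j) j) i = w₀ b i
        rw [show (fun j => (P₁⁻¹.mulVec fun j => w₀ b j) j)
            = P₁⁻¹.mulVec fun j => w₀ b j from rfl,
          Matrix.mulVec_mulVec, hInv, Matrix.one_mulVec]
      rw [h2, map_zero, inner_zero_right, sub_zero] at h1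
      exact inner_self_eq_zero.1 h1
    have hwa : w₀ a = 0 := by
      have h1 := key ((WithLp.toLp 2 (fun i => (P₁⁻¹.mulVec (fun j => w₀ a j)) i) :
        EuclideanSpace ℝ (Fin N))) 0
      have h2 : Stmt15Aux.matCLM N P₁ ((WithLp.toLp 2 (fun i => (P₁⁻¹.mulVec (fun j => w₀ a j)) i) :
          EuclideanSpace ℝ (Fin N))) = w₀ a := by
        ext i
        show (P₁.mulVec fun j => (P₁⁻¹.mulVec fun j => w₀ a j) j) i = w₀ a i
        rw [show (fun j => (P₁⁻¹.mulVec fun j => w₀ a j) j)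
            = P₁⁻¹.mulVec fun j => w₀ a j from rfl,
          Matrix.mulVec_mulVec, hInv, Matrix.one_mulVec]
      rw [h2, map_zero, inner_zero_right, zero_sub, neg_eq_zero] at h1
      exact inner_self_eq_zero.1 h1
    exact ⟨hb.2 ▸ hwb, hb.1 ▸ hwa⟩
  -- STEP 3 : boundary interpolants indexed by p
  have hup : ∀ p : Fin N ⊕ Fin N → ℝ, IsH1Rep (-(1/2)) (1/2)
      (Stmt15Aux.linF (-(1/2)) (1/2) (Stmt15Aux.toE fun i => p (Sum.inr i))
        (Stmt15Aux.toE fun i => p (Sum.inl i)))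
      (fun _ => ((1/2 : ℝ) - (-(1/2)))⁻¹ • (Stmt15Aux.toE (fun i => p (Sum.inl i))
        - Stmt15Aux.toE fun i => p (Sum.inr i))) :=
    fun p => Stmt15Aux.isH1Rep_linF hhalf _ _
  have hupm : ∀ p : Fin N ⊕ Fin N → ℝ,
      MemLp (Stmt15Aux.linF (-(1/2)) (1/2) (Stmt15Aux.toE fun i => p (Sum.inr i))
        (Stmt15Aux.toE fun i => p (Sum.inl i))) 2
        (volume.restrict (Ioo (-(1/2) : ℝ) (1/2))) :=
    fun p => Stmt15Aux.memLp_two_of_isH1Rep (hup p)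
  choose W DW hWa hWf hWbil using
    fun p : Fin N ⊕ Fin N → ℝ => step1 ((hupm p).toLp _) _ _ (hup p) (MemLp.coeFn_toLp _)
  have hbd : ∀ (p : Fin N ⊕ Fin N → ℝ) (w' dw' : ℝ → EuclideanSpace ℝ (Fin N)),
      IsH1Rep a b w' dw' →
      (A ((hupm p).toLp _) : ℝ → EuclideanSpace ℝ (Fin N)) =ᵐ[volume.restrict (Ioo a b)] w' →
      W p b = w' b ∧ W p a = w' a := by
    intro p w' dw' hw' hwf'
    have h := Stmt15Aux.boundary_eq hab (hWa p) hw' ((hWf p).symm.trans hwf')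
    exact ⟨h.2, h.1⟩
  have hWadd : ∀ p q : Fin N ⊕ Fin N → ℝ,
      W (p + q) b = W p b + W q b ∧ W (p + q) a = W p a + W q a := by
    intro p q
    have hfeq : (hupm (p + q)).toLp _ = (hupm p).toLp _ + (hupm q).toLp _ := by
      rw [← MemLp.toLp_add (hupm p) (hupm q)]
      refine MemLp.toLp_congr _ _ (Filter.EventuallyEq.of_eq ?_)
      rw [show Stmt15Aux.toE (N := N) (fun i => (p + q) (Sum.inr i))
          = Stmt15Aux.toE (fun i => p (Sum.inr i)) + Stmt15Aux.toE (fun i => q (Sum.inr i))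
          from rfl,
        show Stmt15Aux.toE (N := N) (fun i => (p + q) (Sum.inl i))
          = Stmt15Aux.toE (fun i => p (Sum.inl i)) + Stmt15Aux.toE (fun i => q (Sum.inl i))
          from rfl,
        Stmt15Aux.linF_add]
    have hsum : (A ((hupm (p + q)).toLp _) : ℝ → EuclideanSpace ℝ (Fin N))
        =ᵐ[volume.restrict (Ioo a b)] W p + W q := by
      rw [hfeq, map_add]
      exact (Lp.coeFn_add _ _).trans ((hWf p).add (hWf q))
    have h := hbd (p + q) (W p + W q) (DW p + DW q)
      (Stmt15Aux.isH1Rep_add (hWa p) (hWa q)) hsum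
    exact ⟨h.1, h.2⟩
  have hWsmul : ∀ (c : ℝ) (p : Fin N ⊕ Fin N → ℝ),
      W (c • p) b = c • W p b ∧ W (c • p) a = c • W p a := by
    intro c p
    have hfeq : (hupm (c • p)).toLp _ = c • (hupm p).toLp _ := by
      rw [← MemLp.toLp_const_smul c (hupm p)]
      refine MemLp.toLp_congr _ _ (Filter.EventuallyEq.of_eq ?_)
      rw [show Stmt15Aux.toE (N := N) (fun i => (c • p) (Sum.inr i))
          = c • Stmt15Aux.toE (fun i => p (Sum.inr i)) from rfl,
        show Stmt15Aux.toE (N := N) (fun i => (c • p) (Sum.inl i))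
          = c • Stmt15Aux.toE (fun i => p (Sum.inl i)) from rfl,
        Stmt15Aux.linF_smul]
    have hsum : (A ((hupm (c • p)).toLp _) : ℝ → EuclideanSpace ℝ (Fin N))
        =ᵐ[volume.restrict (Ioo a b)] c • W p := by
      rw [hfeq, _root_.map_smul]
      exact (Lp.coeFn_smul c _).trans ((hWf p).const_smul c)
    have h := hbd (c • p) (c • W p) (c • DW p)
      (Stmt15Aux.isH1Rep_smul c (hWa p)) hsum
    exact ⟨h.1, h.2⟩
  set Clin : (Fin N ⊕ Fin N → ℝ) →ₗ[ℝ] (Fin N ⊕ Fin N → ℝ) :=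
    { toFun := fun p => Sum.elim (fun i => W p b i) (fun i => W p a i)
      map_add' := by
        intro p q
        funext x
        cases x with
        | inl i =>
          show W (p + q) b i = (Sum.elim (fun i => W p b i) (fun i => W p a i)
            + Sum.elim (fun i => W q b i) (fun i => W q a i)) (Sum.inl i)
          rw [(hWadd p q).1]; rfl
        | inr i =>
          show W (p + q) a i = (Sum.elim (fun i => W p b i) (fun i => W p a i)
            + Sum.elim (fun i => W q b i) (fun i => W q a i)) (Sum.inr i)
          rw [(hWadd p q).2]; rfl
      map_smul' := by
        intro c p
        funext x
        cases x with
        | inl i =>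
          show W (c • p) b i
            = (c • Sum.elim (fun i => W p b i) (fun i => W p a i)) (Sum.inl i)
          rw [(hWsmul c p).1]; rfl
        | inr i =>
          show W (c • p) a i
            = (c • Sum.elim (fun i => W p b i) (fun i => W p a i)) (Sum.inr i)
          rw [(hWsmul c p).2]; rfl } with hClin
  set C : Matrix (Fin N ⊕ Fin N) (Fin N ⊕ Fin N) ℝ := LinearMap.toMatrix' Clin with hC
  have hmulC : ∀ p : Fin N ⊕ Fin N → ℝ,
      C.mulVec p = Sum.elim (fun i => W p b i) (fun i => W p a i) := by
    intro p
    rw [hC, ← Matrix.toLin'_apply, Matrix.toLin'_toMatrix']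
    rfl
  have hquad : ∀ p q : Fin N ⊕ Fin N → ℝ,
      (C.mulVec p) ⬝ᵥ ((Matrix.fromBlocks P₁ 0 0 (-P₁)).mulVec (C.mulVec q))
      = p ⬝ᵥ ((Matrix.fromBlocks 1 0 0 (-1) :
          Matrix (Fin N ⊕ Fin N) (Fin N ⊕ Fin N) ℝ).mulVec q) := by
    intro p q
    have hb := hWbil p ((hupm q).toLp _) _ _ (W q) (DW q) (hup q)
      (MemLp.coeFn_toLp _) (hWa q) (hWf q)
    rw [Stmt15Aux.linF_right hhalf, Stmt15Aux.linF_left, Stmt15Aux.linF_right hhalf,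
      Stmt15Aux.linF_left] at hb
    rw [hmulC p, hmulC q, Stmt15Aux.dotD, Stmt15Aux.dotJ]
    exact hb
  have hCDC : Cᵀ * Matrix.fromBlocks P₁ 0 0 (-P₁) * C = Matrix.fromBlocks 1 0 0 (-1) := by
    have hentry : ∀ p q : Fin N ⊕ Fin N → ℝ,
        p ⬝ᵥ ((Cᵀ * Matrix.fromBlocks P₁ 0 0 (-P₁) * C).mulVec q)
        = p ⬝ᵥ ((Matrix.fromBlocks 1 0 0 (-1) :
            Matrix (Fin N ⊕ Fin N) (Fin N ⊕ Fin N) ℝ).mulVec q) := by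
      intro p q
      rw [← Matrix.mulVec_mulVec, ← Matrix.mulVec_mulVec,
        dotProduct_mulVec p Cᵀ _, Matrix.vecMul_transpose]
      exact hquad p q
    ext i j
    simpa using hentry (Pi.single i 1) (Pi.single j 1)
  have hunit : IsUnit C := by
    rw [Matrix.isUnit_iff_isUnit_det]
    have hdet := congrArg Matrix.det hCDC
    rw [Matrix.det_mul, Matrix.det_mul, Matrix.det_transpose] at hdet
    have hJ : IsUnit ((Matrix.fromBlocks 1 0 0 (-1) :
        Matrix (Fin N ⊕ Fin N) (Fin N ⊕ Fin N) ℝ).det) := by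
      rw [Matrix.det_fromBlocks_zero₂₁, Matrix.det_one, one_mul, Matrix.det_neg,
        Matrix.det_one, mul_one]
      exact (isUnit_one.neg).pow _
    rw [← hdet] at hJ
    exact isUnit_of_mul_isUnit_right hJ
  refine ⟨C, hunit, ?_, hCDC⟩
  intro f u du hu hf
  obtain ⟨w, dw, hw, hwf, -⟩ := step1 f u du hu hf
  refine ⟨w, dw, hw, hwf, ?_⟩
  set p : Fin N ⊕ Fin N → ℝ :=
    Sum.elim (fun i => u (1/2) i) (fun i => u (-(1/2)) i) with hp
  have hud := Stmt15Aux.isH1Rep_sub hu (hup p)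
  have hz1 : (u - Stmt15Aux.linF (-(1/2)) (1/2) (Stmt15Aux.toE fun i => p (Sum.inr i))
      (Stmt15Aux.toE fun i => p (Sum.inl i))) (1/2) = 0 := by
    rw [Pi.sub_apply, Stmt15Aux.linF_right hhalf]
    exact sub_eq_zero_of_eq rfl
  have hz2 : (u - Stmt15Aux.linF (-(1/2)) (1/2) (Stmt15Aux.toE fun i => p (Sum.inr i))
      (Stmt15Aux.toE fun i => p (Sum.inl i))) (-(1/2)) = 0 := by
    rw [Pi.sub_apply, Stmt15Aux.linF_left]
    exact sub_eq_zero_of_eq rfl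
  have hae1 : ((f - (hupm p).toLp _ :
      Lp (EuclideanSpace ℝ (Fin N)) 2 (volume.restrict (Ioo (-(1/2) : ℝ) (1/2)))) :
        ℝ → EuclideanSpace ℝ (Fin N))
      =ᵐ[volume.restrict (Ioo (-(1/2) : ℝ) (1/2))]
      u - Stmt15Aux.linF (-(1/2)) (1/2) (Stmt15Aux.toE fun i => p (Sum.inr i))
        (Stmt15Aux.toE fun i => p (Sum.inl i)) :=
    (Lp.coeFn_sub _ _).trans (hf.sub (MemLp.coeFn_toLp _))
  have hae2 : (A (f - (hupm p).toLp _) : ℝ → EuclideanSpace ℝ (Fin N))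
      =ᵐ[volume.restrict (Ioo a b)] w - W p := by
    rw [map_sub]
    exact (Lp.coeFn_sub _ _).trans (hwf.sub (hWf p))
  have hz := step2 (f - (hupm p).toLp _) _ _ (w - W p) (dw - DW p) hud hae1
    (Stmt15Aux.isH1Rep_sub hw (hWa p)) hae2 hz1 hz2
  have hwb : w b = W p b := sub_eq_zero.1 hz.1
  have hwa : w a = W p a := sub_eq_zero.1 hz.2
  rw [hmulC p, ← hwb, ← hwa]
end

section
/- Let K = (K₁ K₂) ∈ ℝ^{N×2N} with K₁, K₂ ∈ ℝ^{N×N}. Suppose K has rank N and K₁K₁ᵀ ≤ K₂K₂ᵀ (positive semidefinite ordering). Then K₂ is invertible, and M := K₂⁻¹K₁ satisfies MMᵀ ≤ 1 and ker K = ker (M 1), where (M 1) ∈ ℝ^{N×2N} is the block matrix with blocks M and the identity. -/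
open Matrix

lemma conjT_eq_transpose {m n : Type*} (A : Matrix m n ℝ) : Aᴴ = Aᵀ := by
  ext i j; simp [conjTranspose_apply]

/-- if `K = (K₁ K₂) ∈ ℝ^{N×2N}` has rank `N` and `K₁K₁ᵀ ≤ K₂K₂ᵀ`,
then `K₂` is invertible, `M := K₂⁻¹K₁` satisfies `MMᵀ ≤ 1`, and
`ker K = ker (M 1)`. -/
theorem stmt_16 (N : ℕ) (K₁ K₂ : Matrix (Fin N) (Fin N) ℝ)
    (hrank : (Matrix.fromCols K₁ K₂).rank = N)
    (hle : (K₂ * K₂ᵀ - K₁ * K₁ᵀ).PosSemidef) :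
    IsUnit K₂ ∧ (1 - (K₂⁻¹ * K₁) * (K₂⁻¹ * K₁)ᵀ).PosSemidef ∧
    ∀ x : Fin N ⊕ Fin N → ℝ,
      (Matrix.fromCols K₁ K₂).mulVec x = 0 ↔
      (Matrix.fromCols (K₂⁻¹ * K₁) 1).mulVec x = 0 := by
  -- injectivity of Kᵀ
  set K := Matrix.fromCols K₁ K₂ with hK
  have hrankT : Kᵀ.rank = N := by rw [Matrix.rank_transpose, hrank]
  have hinj : Function.Injective Kᵀ.mulVecLin := by
    rw [← LinearMap.ker_eq_bot]
    have := LinearMap.finrank_range_add_finrank_ker Kᵀ.mulVecLin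
    rw [show (Module.finrank ℝ (LinearMap.range Kᵀ.mulVecLin)) = N from hrankT,
      Module.finrank_fintype_fun_eq_card, Fintype.card_fin] at this
    have hker : Module.finrank ℝ (LinearMap.ker Kᵀ.mulVecLin) = 0 := by omega
    exact Submodule.finrank_eq_zero.mp hker
  -- K₂ is a unit
  have hUnit : IsUnit K₂ := by
    rw [Matrix.isUnit_iff_isUnit_det, isUnit_iff_ne_zero]
    intro hdet
    have : K₂ᵀ.det = 0 := by rwa [Matrix.det_transpose]
    obtain ⟨v, hv, hv0⟩ := (Matrix.exists_mulVec_eq_zero_iff).mpr this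
    -- then vᵀ(K₂K₂ᵀ)v = 0, so K₁ᵀ v = 0
    have h2 : K₂ᵀ *ᵥ v = 0 := hv0
    have hq := hle.dotProduct_mulVec_nonneg v
    have hexp : v ⬝ᵥ ((K₂ * K₂ᵀ - K₁ * K₁ᵀ) *ᵥ v) =
        (K₂ᵀ *ᵥ v) ⬝ᵥ (K₂ᵀ *ᵥ v) - (K₁ᵀ *ᵥ v) ⬝ᵥ (K₁ᵀ *ᵥ v) := by
      rw [Matrix.sub_mulVec, dotProduct_sub, ← Matrix.mulVec_mulVec,
        ← Matrix.mulVec_mulVec, Matrix.dotProduct_mulVec v K₂,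
        Matrix.dotProduct_mulVec v K₁, ← Matrix.mulVec_transpose,
        ← Matrix.mulVec_transpose]
    simp only [RCLike.star_def, starRingEnd_apply, star_trivial] at hq
    rw [hexp, h2] at hq
    simp only [dotProduct_zero, zero_sub, le_neg, neg_zero] at hq
    have h1 : K₁ᵀ *ᵥ v = 0 := by
      have hnn : (0:ℝ) ≤ (K₁ᵀ *ᵥ v) ⬝ᵥ (K₁ᵀ *ᵥ v) := by
        have : (K₁ᵀ *ᵥ v) ⬝ᵥ (K₁ᵀ *ᵥ v) = (K₁ᵀ *ᵥ v) ⬝ᵥ star (K₁ᵀ *ᵥ v) := by simp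
        rw [this]; exact dotProduct_self_star_nonneg _
      have hle0 : (K₁ᵀ *ᵥ v) ⬝ᵥ (K₁ᵀ *ᵥ v) ≤ 0 := by linarith
      exact dotProduct_self_eq_zero.mp (le_antisymm hle0 hnn)
    apply hv
    have : Kᵀ.mulVecLin v = Kᵀ.mulVecLin 0 := by
      simp only [Matrix.mulVecLin_apply, Matrix.mulVec_zero]
      rw [hK, Matrix.transpose_fromCols, Matrix.fromRows_mulVec, h1, h2]
      ext (i | i) <;> rfl
    exact hinj this
  refine ⟨hUnit, ?_, ?_⟩
  · have hident : 1 - (K₂⁻¹ * K₁) * (K₂⁻¹ * K₁)ᵀ =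
        K₂⁻¹ * (K₂ * K₂ᵀ - K₁ * K₁ᵀ) * (K₂⁻¹)ᵀ := by
      have h1 : K₂⁻¹ * K₂ = 1 := Matrix.nonsing_inv_mul _ ((Matrix.isUnit_iff_isUnit_det K₂).mp hUnit)
      have h2 : K₂ᵀ * K₂⁻¹ᵀ = 1 := by rw [← Matrix.transpose_mul, h1, Matrix.transpose_one]
      rw [Matrix.transpose_mul, Matrix.mul_sub, Matrix.sub_mul]
      simp only [Matrix.mul_assoc]
      rw [h2, Matrix.mul_one, h1]
    rw [hident]
    have := hle.mul_mul_conjTranspose_same K₂⁻¹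
    rwa [conjT_eq_transpose] at this
  · intro x
    have hfc : Matrix.fromCols (K₂⁻¹ * K₁) 1 = K₂⁻¹ * K := by
      rw [hK, Matrix.mul_fromCols,
        Matrix.nonsing_inv_mul _ ((Matrix.isUnit_iff_isUnit_det K₂).mp hUnit)]
    rw [hfc]
    constructor
    · intro h
      rw [← Matrix.mulVec_mulVec, h, Matrix.mulVec_zero]
    · intro h
      have := congrArg (K₂.mulVec) h
      rw [Matrix.mulVec_zero, Matrix.mulVec_mulVec, ← Matrix.mul_assoc,
        Matrix.mul_nonsing_inv _ ((Matrix.isUnit_iff_isUnit_det K₂).mp hUnit), Matrix.one_mul] at this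
      exact this
end

section
/- Let M ∈ ℝ^{N×N} with MᵀM ≤ 1, let P₁ ∈ ℝ^{N×N} be symmetric invertible, and let C ∈ ℝ^{2N×2N} be invertible with Cᵀ diag(P₁, -P₁) C = diag(1, -1). Set W_B := (M 1) C⁻¹ ∈ ℝ^{N×2N}. Then W_B has rank N and W_B diag(-P₁⁻¹, P₁⁻¹) W_Bᵀ ≥ 0 (positive semidefinite). -/
open Matrix

private lemma dot_self_nonneg {N : ℕ} (u : Fin N → ℝ) : 0 ≤ u ⬝ᵥ u :=
  Finset.sum_nonneg fun i _ => mul_self_nonneg (u i)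

private lemma dot_cs {N : ℕ} (u v : Fin N → ℝ) :
    (u ⬝ᵥ v) ^ 2 ≤ (u ⬝ᵥ u) * (v ⬝ᵥ v) := by
  have := Finset.sum_mul_sq_le_sq_mul_sq Finset.univ u v
  simpa [dotProduct, sq] using this

private lemma psd_flip {N : ℕ} {M : Matrix (Fin N) (Fin N) ℝ}
    (hM : (1 - Mᵀ * M).PosSemidef) : (1 - M * Mᵀ).PosSemidef := by
  have h2 : ∀ z : Fin N → ℝ, (M *ᵥ z) ⬝ᵥ (M *ᵥ z) ≤ z ⬝ᵥ z := by
    intro z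
    have h := hM.dotProduct_mulVec_nonneg z
    rw [star_trivial, Matrix.sub_mulVec, Matrix.one_mulVec, dotProduct_sub] at h
    have e : z ⬝ᵥ ((Mᵀ * M) *ᵥ z) = (M *ᵥ z) ⬝ᵥ (M *ᵥ z) := by
      rw [← Matrix.mulVec_mulVec, Matrix.dotProduct_mulVec, Matrix.vecMul_transpose]
    rw [e] at h
    linarith
  refine Matrix.PosSemidef.of_dotProduct_mulVec_nonneg ?_ ?_
  · have hh := Matrix.isHermitian_mul_conjTranspose_self M
    rw [Matrix.conjTranspose_eq_transpose_of_trivial] at hh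
    exact Matrix.isHermitian_one.sub hh
  · intro x
    rw [star_trivial]
    have key : x ⬝ᵥ ((1 - M * Mᵀ) *ᵥ x) = x ⬝ᵥ x - (Mᵀ *ᵥ x) ⬝ᵥ (Mᵀ *ᵥ x) := by
      rw [Matrix.sub_mulVec, Matrix.one_mulVec, dotProduct_sub,
        ← Matrix.mulVec_mulVec, Matrix.dotProduct_mulVec, ← Matrix.mulVec_transpose]
    have h3 : ((Mᵀ *ᵥ x) ⬝ᵥ (Mᵀ *ᵥ x)) ^ 2
        ≤ (x ⬝ᵥ x) * ((M *ᵥ (Mᵀ *ᵥ x)) ⬝ᵥ (M *ᵥ (Mᵀ *ᵥ x))) := by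
      have hxy : x ⬝ᵥ (M *ᵥ (Mᵀ *ᵥ x)) = (Mᵀ *ᵥ x) ⬝ᵥ (Mᵀ *ᵥ x) := by
        rw [Matrix.dotProduct_mulVec, ← Matrix.mulVec_transpose]
      calc ((Mᵀ *ᵥ x) ⬝ᵥ (Mᵀ *ᵥ x)) ^ 2 = (x ⬝ᵥ (M *ᵥ (Mᵀ *ᵥ x))) ^ 2 := by rw [hxy]
        _ ≤ (x ⬝ᵥ x) * ((M *ᵥ (Mᵀ *ᵥ x)) ⬝ᵥ (M *ᵥ (Mᵀ *ᵥ x))) := dot_cs _ _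
    have h2' := h2 (Mᵀ *ᵥ x)
    have hb := dot_self_nonneg (Mᵀ *ᵥ x)
    have ha := dot_self_nonneg x
    rw [key]
    nlinarith [h2', h3, hb, ha]

/-- for `M` with `MᵀM ≤ 1`, `P` symmetric invertible, and `C`
invertible with `Cᵀ diag(P,-P) C = diag(1,-1)`, the matrix `W_B := (M 1) C⁻¹` has
rank `N` and satisfies `W_B diag(-P⁻¹, P⁻¹) W_Bᵀ ≥ 0`. -/
theorem stmt_19 (N : ℕ) (M P : Matrix (Fin N) (Fin N) ℝ)
    (hM : (1 - Mᵀ * M).PosSemidef) (hP : P.IsHermitian) (hPinv : IsUnit P.det)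
    (C : Matrix (Fin N ⊕ Fin N) (Fin N ⊕ Fin N) ℝ) (hC : IsUnit C)
    (hCeq : Cᵀ * Matrix.fromBlocks P 0 0 (-P) * C = Matrix.fromBlocks 1 0 0 (-1)) :
    (Matrix.fromCols M (1 : Matrix (Fin N) (Fin N) ℝ) * C⁻¹).rank = N ∧
    ((Matrix.fromCols M (1 : Matrix (Fin N) (Fin N) ℝ) * C⁻¹) * Matrix.fromBlocks (-P⁻¹) 0 0 P⁻¹ *
      (Matrix.fromCols M (1 : Matrix (Fin N) (Fin N) ℝ) * C⁻¹)ᵀ).PosSemidef := by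
  have hCdet : IsUnit C.det := (Matrix.isUnit_iff_isUnit_det C).mp hC
  have hCTdet : IsUnit Cᵀ.det := by rwa [Matrix.det_transpose]
  have hCinvdet : IsUnit C⁻¹.det := C.isUnit_nonsing_inv_det hCdet
  set D : Matrix (Fin N ⊕ Fin N) (Fin N ⊕ Fin N) ℝ := Matrix.fromBlocks P 0 0 (-P) with hD
  set J : Matrix (Fin N ⊕ Fin N) (Fin N ⊕ Fin N) ℝ := Matrix.fromBlocks 1 0 0 (-1) with hJ
  have hJJ : J * J = 1 := by
    rw [hJ, Matrix.fromBlocks_multiply]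
    simp [← Matrix.fromBlocks_one]
  have hDinv : D⁻¹ = Matrix.fromBlocks P⁻¹ 0 0 (-P⁻¹) := by
    apply Matrix.inv_eq_right_inv
    rw [hD, Matrix.fromBlocks_multiply]
    simp [Matrix.mul_nonsing_inv P hPinv, ← Matrix.fromBlocks_one]
  have hDexpr : D = (Cᵀ)⁻¹ * J * C⁻¹ := by
    rw [← hCeq]
    rw [Matrix.mul_assoc, Matrix.mul_assoc, Matrix.mul_nonsing_inv C hCdet,
      Matrix.mul_one, ← Matrix.mul_assoc, Matrix.nonsing_inv_mul Cᵀ hCTdet, Matrix.one_mul]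
  have hDCJ : D * (C * J * Cᵀ) = 1 := by
    rw [hDexpr]
    calc (Cᵀ)⁻¹ * J * C⁻¹ * (C * J * Cᵀ)
        = (Cᵀ)⁻¹ * (J * ((C⁻¹ * C) * J)) * Cᵀ := by
          simp only [Matrix.mul_assoc]
      _ = 1 := by
          rw [Matrix.nonsing_inv_mul C hCdet, Matrix.one_mul, hJJ, Matrix.mul_one,
            Matrix.nonsing_inv_mul Cᵀ hCTdet]
  have hkey : Matrix.fromBlocks (-P⁻¹) 0 0 P⁻¹
      = C * Matrix.fromBlocks (-1) 0 0 1 * Cᵀ := by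
    have h1 : D⁻¹ = C * J * Cᵀ := Matrix.inv_eq_right_inv hDCJ
    have h2 : Matrix.fromBlocks (-P⁻¹) 0 0 (P⁻¹ : Matrix (Fin N) (Fin N) ℝ) = -D⁻¹ := by
      rw [hDinv]
      simp [Matrix.fromBlocks_neg]
    have h3 : C * Matrix.fromBlocks (-1) 0 0 1 * Cᵀ = -(C * J * Cᵀ) := by
      have : (Matrix.fromBlocks (-1) 0 0 1 : Matrix (Fin N ⊕ Fin N) (Fin N ⊕ Fin N) ℝ) = -J := by
        rw [hJ]; simp [Matrix.fromBlocks_neg]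
      rw [this, Matrix.mul_neg, Matrix.neg_mul]
    rw [h2, h3, h1]
  set F : Matrix (Fin N) (Fin N ⊕ Fin N) ℝ := Matrix.fromCols M 1 with hF
  set K : Matrix (Fin N ⊕ Fin N) (Fin N ⊕ Fin N) ℝ := Matrix.fromBlocks (-1) 0 0 1 with hK
  constructor
  · -- rank
    rw [Matrix.rank_mul_eq_left_of_isUnit_det C⁻¹ F hCinvdet]
    apply le_antisymm
    · simpa using F.rank_le_card_height
    · have hone : F * Matrix.fromRows (0 : Matrix (Fin N) (Fin N) ℝ)
          (1 : Matrix (Fin N) (Fin N) ℝ) = (1 : Matrix (Fin N) (Fin N) ℝ) := by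
        rw [hF, Matrix.fromCols_mul_fromRows]
        simp
      have := Matrix.rank_mul_le_left F (Matrix.fromRows (0 : Matrix (Fin N) (Fin N) ℝ) (1 : Matrix (Fin N) (Fin N) ℝ))
      rw [hone, Matrix.rank_one] at this
      simpa using this
  · -- PSD
    have e1 : C⁻¹ * (C * K * Cᵀ) = K * Cᵀ := by
      rw [← Matrix.mul_assoc, ← Matrix.mul_assoc, Matrix.nonsing_inv_mul C hCdet,
        Matrix.one_mul]
    have e2 : K * Cᵀ * ((Cᵀ)⁻¹ * Fᵀ) = K * Fᵀ := by
      rw [Matrix.mul_assoc, ← Matrix.mul_assoc Cᵀ, Matrix.mul_nonsing_inv Cᵀ hCTdet,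
        Matrix.one_mul]
    have e3 : F * (K * Fᵀ) = 1 - M * Mᵀ := by
      rw [← Matrix.mul_assoc, hF, hK, Matrix.fromCols_mul_fromBlocks,
        Matrix.transpose_fromCols, Matrix.transpose_one]
      simp only [Matrix.mul_neg, Matrix.mul_one, Matrix.mul_zero, add_zero, zero_add,
        Matrix.one_mul]
      rw [Matrix.fromCols_mul_fromRows]
      simp only [Matrix.neg_mul, Matrix.one_mul]
      abel
    have hexpr : F * C⁻¹ * Matrix.fromBlocks (-P⁻¹) 0 0 P⁻¹ * (F * C⁻¹)ᵀ = 1 - M * Mᵀ := by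
      rw [hkey, Matrix.transpose_mul, Matrix.transpose_nonsing_inv,
        Matrix.mul_assoc F C⁻¹, e1, Matrix.mul_assoc F (K * Cᵀ), e2, e3]
    rw [hexpr]
    exact psd_flip hM
end
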